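/- Let V be a topological vector space and V1, V2 closed subspaces with V1 ∩ V2 finite-dimensional and V1 + V2 closed of finite codimension (i.e., V1, V2 are quasi-complementary with excess d = dim(V1∩V2) − codim(V1+V2)). If V1' is a closed subspace containing V1 with dim(V1'/V1) = 1, then V1' and V2 are quasi-complementary with excess d + 1. -/

import Mathlib

/-- Two closed subspaces `S₁, S₂` of a topological vector space are *quasi-complementary*
if `S₁ ⊓ S₂` is finite-dimensional and `S₁ ⊔ S₂` is closed of finite codimension;
their *excess* is `dim (S₁ ⊓ S₂) - codim (S₁ ⊔ S₂)`. -/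
theorem stmt0 {V : Type*} [AddCommGroup V] [Module ℂ V] [TopologicalSpace V]
    [IsTopologicalAddGroup V] [ContinuousSMul ℂ V]
    (V1 V2 V1' : Submodule ℂ V)
    (h1c : IsClosed (V1 : Set V)) (h2c : IsClosed (V2 : Set V))
    (h1'c : IsClosed (V1' : Set V))
    (hfin : FiniteDimensional ℂ ↥(V1 ⊓ V2))
    (hclosed : IsClosed ((V1 ⊔ V2 : Submodule ℂ V) : Set V))
    (hcofin : FiniteDimensional ℂ (V ⧸ (V1 ⊔ V2)))
    (d : ℤ)
    (hd : (Module.finrank ℂ ↥(V1 ⊓ V2) : ℤ) - Module.finrank ℂ (V ⧸ (V1 ⊔ V2)) = d)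
    (hle : V1 ≤ V1')
    (hdim : Module.finrank ℂ (↥V1' ⧸ Submodule.comap V1'.subtype V1) = 1) :
    FiniteDimensional ℂ ↥(V1' ⊓ V2) ∧
      IsClosed ((V1' ⊔ V2 : Submodule ℂ V) : Set V) ∧
      FiniteDimensional ℂ (V ⧸ (V1' ⊔ V2)) ∧
      (Module.finrank ℂ ↥(V1' ⊓ V2) : ℤ) - Module.finrank ℂ (V ⧸ (V1' ⊔ V2)) = d + 1 := by
  classical
  -- extract a vector x with V1' = V1 + span x
  obtain ⟨q, hq0, hqspan⟩ := finrank_eq_one_iff'.mp hdim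
  obtain ⟨x', hx'⟩ := Submodule.Quotient.mk_surjective _ q
  set x : V := (x' : V) with hxdef
  have hxmem : x ∈ V1' := x'.2
  have hxnot : x ∉ V1 := by
    intro hx
    apply hq0
    rw [← hx', Submodule.Quotient.mk_eq_zero]
    exact hx
  have hrep : ∀ y ∈ V1', ∃ c : ℂ, y - c • x ∈ V1 := by
    intro y hy
    obtain ⟨c, hc⟩ := hqspan (Submodule.Quotient.mk ⟨y, hy⟩)
    rw [← hx', ← Submodule.Quotient.mk_smul, ← sub_eq_zero, ← Submodule.Quotient.mk_sub,
      Submodule.Quotient.mk_eq_zero] at hc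
    refine ⟨c, ?_⟩
    have h2 : c • x - y ∈ V1 := by simpa using hc
    simpa using V1.neg_mem h2
  by_cases hx2 : x ∈ V1 ⊔ V2
  · -- Case A: x ∈ V1 ⊔ V2, the intersection grows by 1, the sum is unchanged
    obtain ⟨a, ha, b, hb, hab⟩ := Submodule.mem_sup.mp hx2
    have hbV1 : b ∉ V1 := by
      intro h
      exact hxnot (hab ▸ V1.add_mem ha h)
    have hbne : b ≠ 0 := by rintro rfl; exact hbV1 (V1.zero_mem)
    have hI : V1' ⊓ V2 = (V1 ⊓ V2) ⊔ Submodule.span ℂ {b} := by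
      apply le_antisymm
      · rintro y ⟨hy1, hy2⟩
        obtain ⟨c, hc⟩ := hrep y hy1
        have h1 : y - c • b ∈ V1 := by
          have : y - c • b = (y - c • x) + c • a := by
            rw [← hab]; module
          rw [this]
          exact V1.add_mem hc (V1.smul_mem c ha)
        have h2 : y - c • b ∈ V2 := V2.sub_mem hy2 (V2.smul_mem c hb)
        have : y = (y - c • b) + c • b := by abel
        rw [this]
        exact Submodule.add_mem _ (Submodule.mem_sup_left ⟨h1, h2⟩)
          (Submodule.mem_sup_right (Submodule.smul_mem _ c (Submodule.mem_span_singleton_self b)))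
      · apply sup_le
        · exact inf_le_inf_right _ hle
        · rw [Submodule.span_singleton_le_iff_mem]
          constructor
          · have : b = x - a := by rw [← hab]; abel
            rw [this]
            exact V1'.sub_mem hxmem (hle ha)
          · exact hb
    have hS : V1' ⊔ V2 = V1 ⊔ V2 := by
      apply le_antisymm
      · apply sup_le _ le_sup_right
        intro y hy
        obtain ⟨c, hc⟩ := hrep y hy
        have : y = (y - c • x) + c • x := by abel
        rw [this]
        exact Submodule.add_mem _ (Submodule.mem_sup_left hc)
          (Submodule.smul_mem _ c hx2)
      · exact sup_le_sup_right hle V2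
    have hsp : FiniteDimensional ℂ ↥(Submodule.span ℂ ({b} : Set V)) :=
      inferInstance
    have hfin' : FiniteDimensional ℂ ↥(V1' ⊓ V2) := by
      rw [hI]; infer_instance
    have hdisj : (V1 ⊓ V2) ⊓ Submodule.span ℂ {b} = ⊥ := by
      rw [eq_bot_iff]
      rintro z ⟨⟨hz1, _⟩, hz2⟩
      obtain ⟨c, rfl⟩ := Submodule.mem_span_singleton.mp hz2
      rcases eq_or_ne c 0 with rfl | hc
      · simp
      · exfalso
        exact hbV1 (by simpa [smul_smul, inv_mul_cancel₀ hc] using V1.smul_mem c⁻¹ hz1)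
    have hrk := Submodule.finrank_sup_add_finrank_inf_eq (V1 ⊓ V2) (Submodule.span ℂ {b})
    rw [hdisj, finrank_bot, finrank_span_singleton hbne] at hrk
    refine ⟨hfin', ?_, ?_, ?_⟩
    · rw [hS]; exact hclosed
    · rw [hS]; exact hcofin
    · rw [hS, hI]
      have : (Module.finrank ℂ ↥((V1 ⊓ V2) ⊔ Submodule.span ℂ {b}) : ℤ)
          = Module.finrank ℂ ↥(V1 ⊓ V2) + 1 := by exact_mod_cast hrk
      omega
  · -- Case B: x ∉ V1 ⊔ V2, the intersection is unchanged, the codimension drops by 1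
    have hI : V1' ⊓ V2 = V1 ⊓ V2 := by
      apply le_antisymm
      · rintro y ⟨hy1, hy2⟩
        obtain ⟨c, hc⟩ := hrep y hy1
        rcases eq_or_ne c 0 with rfl | hcne
        · simp only [zero_smul, sub_zero] at hc
          exact ⟨hc, hy2⟩
        · exfalso
          apply hx2
          have hcx : c • x ∈ V1 ⊔ V2 := by
            have : c • x = -(y - c • x) + y := by abel
            rw [this]
            exact Submodule.add_mem _ (Submodule.mem_sup_left (V1.neg_mem hc))
              (Submodule.mem_sup_right hy2)
          simpa [smul_smul, inv_mul_cancel₀ hcne] using (V1 ⊔ V2).smul_mem c⁻¹ hcx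
      · exact inf_le_inf_right _ hle
    set W : Submodule ℂ V := V1 ⊔ V2 with hW
    have hxW : x ∉ W := hx2
    have hS : V1' ⊔ V2 = W ⊔ Submodule.span ℂ {x} := by
      apply le_antisymm
      · apply sup_le
        · intro y hy
          obtain ⟨c, hc⟩ := hrep y hy
          have : y = (y - c • x) + c • x := by abel
          rw [this]
          exact Submodule.add_mem _
            (Submodule.mem_sup_left (Submodule.mem_sup_left hc))
            (Submodule.mem_sup_right (Submodule.smul_mem _ c (Submodule.mem_span_singleton_self x)))
        · exact le_sup_of_le_left le_sup_right
      · apply sup_le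
        · exact sup_le (le_sup_of_le_left hle) le_sup_right
        · rw [Submodule.span_singleton_le_iff_mem]
          exact Submodule.mem_sup_left hxmem
    haveI : IsClosed (W : Set V) := hclosed
    have hmk0 : W.mkQ x ≠ 0 := by
      rw [Submodule.mkQ_apply, ne_eq, Submodule.Quotient.mk_eq_zero]
      exact hxW
    -- identify the new sum as a preimage of a finite-dimensional (hence closed) subspace
    have hmap : Submodule.map W.mkQ (W ⊔ Submodule.span ℂ {x})
        = Submodule.span ℂ {W.mkQ x} := by
      rw [Submodule.map_sup, Submodule.mkQ_map_self, bot_sup_eq, Submodule.map_span,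
        Set.image_singleton]
    have hcomap : W ⊔ Submodule.span ℂ {x}
        = Submodule.comap W.mkQ (Submodule.span ℂ {W.mkQ x}) := by
      rw [← hmap, Submodule.comap_map_eq, Submodule.ker_mkQ, sup_comm W,
        sup_assoc, sup_idem]
    haveI : FiniteDimensional ℂ ↥(Submodule.span ℂ {W.mkQ x}) :=
      inferInstance
    have hclosed' : IsClosed ((W ⊔ Submodule.span ℂ {x} : Submodule ℂ V) : Set V) := by
      rw [hcomap]
      exact (Submodule.closed_of_finiteDimensional
        (Submodule.span ℂ {W.mkQ x})).preimage W.isOpenQuotientMap_mkQ.continuous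
    have hle' : W ≤ W ⊔ Submodule.span ℂ {x} := le_sup_left
    have e := Submodule.quotientQuotientEquivQuotient W (W ⊔ Submodule.span ℂ {x}) hle'
    rw [hmap] at e
    haveI hfin' : FiniteDimensional ℂ (V ⧸ (W ⊔ Submodule.span ℂ {x})) :=
      Module.Finite.equiv e
    have hrk := Submodule.finrank_quotient_add_finrank (Submodule.span ℂ {W.mkQ x})
    rw [finrank_span_singleton hmk0] at hrk
    have hrk' : Module.finrank ℂ (V ⧸ (W ⊔ Submodule.span ℂ {x})) + 1
        = Module.finrank ℂ (V ⧸ W) := by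
      rw [← e.finrank_eq]; exact hrk
    refine ⟨?_, ?_, ?_, ?_⟩
    · rw [hI]; exact hfin
    · rw [hS]; exact hclosed'
    · rw [hS]; exact hfin'
    · rw [hI, hS]
      have h1 : (Module.finrank ℂ (V ⧸ (W ⊔ Submodule.span ℂ {x})) : ℤ) + 1
          = Module.finrank ℂ (V ⧸ W) := by exact_mod_cast hrk'
      omega
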